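/- For every subset J ⊆ {1,…,l}, the set T_J = ⋃_{w ∈ W_J} w(D) is a convex cone in ℝ^l. -/

import Mathlib

open Matrix Finset

/-- The Gram matrix `B` with `B i i = 1` and `B i k = -(b i k)/2` for `i ≠ k`. -/
noncomputable def gramB (l : ℕ) (b : Fin l → Fin l → ℝ) : Matrix (Fin l) (Fin l) ℝ :=
  fun i k => if i = k then 1 else -(b i k) / 2

/-- The bilinear form `⟨v, w⟩_B = vᵀ B w`. -/
noncomputable def bform (l : ℕ) (b : Fin l → Fin l → ℝ) (v w : Fin l → ℝ) : ℝ :=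
  dotProduct v ((gramB l b).mulVec w)

/-- The matrix `M j` of the reflection `σ j (w) = w - 2⟨w, e j⟩_B e j`: it agrees with
the identity except in row `j`, where `(M j) j j = -1` and `(M j) j k = b j k` for `k ≠ j`. -/
noncomputable def reflM (l : ℕ) (b : Fin l → Fin l → ℝ) (j : Fin l) :
    Matrix (Fin l) (Fin l) ℝ :=
  fun r c => if r = j then (if c = j then -1 else b j c) else (if r = c then 1 else 0)

/-- The subgroup `W_J` generated by the reflections `σ j`, `j ∈ J` (since each `σ j` is an
involution, it coincides with the submonoid generated by them). -/
noncomputable def WJ (l : ℕ) (b : Fin l → Fin l → ℝ) (J : Set (Fin l)) :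
    Submonoid (Matrix (Fin l) (Fin l) ℝ) :=
  Submonoid.closure (reflM l b '' J)

/-- The fundamental chamber `D = {x : ⟨x, e i⟩_B ≥ 0 for all i}`. -/
noncomputable def chamberD (l : ℕ) (b : Fin l → Fin l → ℝ) : Set (Fin l → ℝ) :=
  {x | ∀ i : Fin l, 0 ≤ bform l b x (Pi.single i 1)}

/-- The cone `T_J = ⋃_{w ∈ W_J} w(D)`. -/
noncomputable def TJ (l : ℕ) (b : Fin l → Fin l → ℝ) (J : Set (Fin l)) : Set (Fin l → ℝ) :=
  {y | ∃ w ∈ WJ l b J, ∃ x ∈ chamberD l b, y = w.mulVec x}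

section Lemmas

variable {l : ℕ} {b : Fin l → Fin l → ℝ}

lemma bform_add_left (x y v : Fin l → ℝ) :
    bform l b (x + y) v = bform l b x v + bform l b y v := by
  simp [bform, add_dotProduct]

lemma bform_sub_left (x y v : Fin l → ℝ) :
    bform l b (x - y) v = bform l b x v - bform l b y v := by
  simp [bform, sub_dotProduct]

lemma bform_smul_left (c : ℝ) (x v : Fin l → ℝ) :
    bform l b (c • x) v = c * bform l b x v := by
  simp [bform, smul_dotProduct]

lemma bform_sub_right (x u v : Fin l → ℝ) :
    bform l b x (u - v) = bform l b x u - bform l b x v := by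
  simp [bform, Matrix.mulVec_sub, dotProduct_sub]

lemma bform_smul_right (c : ℝ) (x v : Fin l → ℝ) :
    bform l b x (c • v) = c * bform l b x v := by
  simp [bform, Matrix.mulVec_smul, dotProduct_smul]

lemma bform_neg_right (x v : Fin l → ℝ) :
    bform l b x (-v) = - bform l b x v := by
  simp [bform, Matrix.mulVec_neg, dotProduct_neg]

lemma bform_comb (a c : ℝ) (x y v : Fin l → ℝ) :
    bform l b (a • x + c • y) v = a * bform l b x v + c * bform l b y v := by
  rw [bform_add_left, bform_smul_left, bform_smul_left]

lemma bform_expand (z v : Fin l → ℝ) :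
    bform l b z v = ∑ k, v k * bform l b z (Pi.single k 1) := by
  have h1 : ∀ k, bform l b z (Pi.single k 1) = ∑ r, z r * gramB l b r k := by
    intro k
    simp [bform, Matrix.mulVec_single, dotProduct]
  rw [Finset.sum_congr rfl (fun k (_ : k ∈ Finset.univ) => by rw [h1 k])]
  simp only [bform, dotProduct, Matrix.mulVec, Finset.mul_sum]
  rw [Finset.sum_comm]
  exact Finset.sum_congr rfl fun r _ => Finset.sum_congr rfl fun c _ => by ring

lemma gramB_symm (hsym : ∀ i j, i ≠ j → b i j = b j i) (i k : Fin l) :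
    gramB l b i k = gramB l b k i := by
  by_cases h : i = k
  · subst h; rfl
  · simp [gramB, h, Ne.symm h, hsym i k h]

lemma bform_symm (hsym : ∀ i j, i ≠ j → b i j = b j i) (u v : Fin l → ℝ) :
    bform l b u v = bform l b v u := by
  simp only [bform, dotProduct, Matrix.mulVec, Finset.mul_sum]
  rw [Finset.sum_comm]
  refine Finset.sum_congr rfl fun r _ => Finset.sum_congr rfl fun c _ => ?_
  rw [gramB_symm hsym r c]; ring

lemma bform_single_single (i j : Fin l) :
    bform l b (Pi.single i 1) (Pi.single j 1) = gramB l b i j := by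
  simp [bform, Matrix.mulVec_single, single_dotProduct]

lemma bform_ee (j : Fin l) : bform l b (Pi.single j 1) (Pi.single j 1) = 1 := by
  rw [bform_single_single]; simp [gramB]

lemma reflM_mulVec_ne (j : Fin l) (v : Fin l → ℝ) {r : Fin l} (h : r ≠ j) :
    ((reflM l b j) *ᵥ v) r = v r := by
  simp [Matrix.mulVec, dotProduct, reflM, h]

lemma reflM_mulVec_self (j : Fin l) (v : Fin l → ℝ) :
    ((reflM l b j) *ᵥ v) j = -(v j) + ∑ k ∈ Finset.univ.erase j, b j k * v k := by
  have h : ((reflM l b j) *ᵥ v) j = ∑ c, (if c = j then -1 else b j c) * v c := by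
    simp [Matrix.mulVec, dotProduct, reflM]
  rw [h, ← Finset.sum_erase_add _ _ (Finset.mem_univ j), if_pos rfl,
    Finset.sum_congr rfl (fun c hc => by rw [if_neg (Finset.ne_of_mem_erase hc)])]
  ring

lemma bform_single_right (v : Fin l → ℝ) (j : Fin l) :
    bform l b v (Pi.single j 1) = v j - ∑ k ∈ Finset.univ.erase j, (b k j / 2) * v k := by
  simp only [bform, Matrix.mulVec_single, mul_one]
  have h : v ⬝ᵥ MulOpposite.op (1 : ℝ) • (gramB l b).col j = ∑ r, v r * gramB l b r j := by
    simp [dotProduct]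
  rw [h, ← Finset.sum_erase_add _ _ (Finset.mem_univ j)]
  simp only [gramB, if_pos rfl, mul_one]
  rw [Finset.sum_congr rfl (fun c hc => by
    rw [if_neg (Finset.ne_of_mem_erase hc)])]
  rw [Finset.sum_congr rfl (fun c _ => show v c * (-b c j / 2) = -(b c j / 2 * v c) by ring),
    Finset.sum_neg_distrib]
  simp only [if_true, mul_one]
  ring

lemma reflM_mulVec_eq (hsym : ∀ i j, i ≠ j → b i j = b j i) (j : Fin l) (v : Fin l → ℝ) :
    (reflM l b j) *ᵥ v
      = v - (2 * bform l b v (Pi.single j 1)) • (Pi.single j 1 : Fin l → ℝ) := by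
  funext r
  by_cases h : r = j
  · subst h
    rw [reflM_mulVec_self]
    simp only [Pi.sub_apply, Pi.smul_apply, Pi.single_eq_same, smul_eq_mul, mul_one]
    rw [bform_single_right]
    rw [Finset.sum_congr rfl (fun c hc => by
      rw [hsym r c (Ne.symm (Finset.ne_of_mem_erase hc))])]
    have hS : ∑ x ∈ Finset.univ.erase r, b x r * v x
        = 2 * ∑ x ∈ Finset.univ.erase r, b x r / 2 * v x := by
      rw [Finset.mul_sum]
      exact Finset.sum_congr rfl fun c _ => by ring
    rw [hS]
    ring
  · rw [reflM_mulVec_ne j v h]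
    simp [Pi.single_eq_of_ne h]

lemma bform_reflM_left (hsym : ∀ i j, i ≠ j → b i j = b j i) (j : Fin l) (u v : Fin l → ℝ) :
    bform l b ((reflM l b j) *ᵥ u) v
      = bform l b u v - 2 * bform l b u (Pi.single j 1) * bform l b (Pi.single j 1) v := by
  rw [reflM_mulVec_eq hsym, bform_sub_left, bform_smul_left]

lemma bform_reflM_comm (hsym : ∀ i j, i ≠ j → b i j = b j i) (j : Fin l) (u v : Fin l → ℝ) :
    bform l b ((reflM l b j) *ᵥ u) v = bform l b u ((reflM l b j) *ᵥ v) := by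
  rw [bform_reflM_left hsym, reflM_mulVec_eq hsym, bform_sub_right, bform_smul_right]
  rw [bform_symm hsym (Pi.single j 1) v]
  ring

lemma reflM_single_self (hsym : ∀ i j, i ≠ j → b i j = b j i) (j : Fin l) :
    (reflM l b j) *ᵥ (Pi.single j 1 : Fin l → ℝ) = -(Pi.single j 1 : Fin l → ℝ) := by
  rw [reflM_mulVec_eq hsym, bform_ee]
  funext r
  simp only [Pi.sub_apply, Pi.smul_apply, Pi.neg_apply, smul_eq_mul]
  ring

lemma reflM_invol (hsym : ∀ i j, i ≠ j → b i j = b j i) (j : Fin l) (v : Fin l → ℝ) :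
    (reflM l b j) *ᵥ ((reflM l b j) *ᵥ v) = v := by
  have h1 : bform l b ((reflM l b j) *ᵥ v) (Pi.single j 1)
      = - bform l b v (Pi.single j 1) := by
    rw [bform_reflM_comm hsym, reflM_single_self hsym, bform_neg_right]
  rw [reflM_mulVec_eq hsym j ((reflM l b j) *ᵥ v), h1, reflM_mulVec_eq hsym j v]
  funext r
  simp only [Pi.sub_apply, Pi.smul_apply, smul_eq_mul]
  ring


noncomputable def wP (l : ℕ) (b : Fin l → Fin l → ℝ) (L : List (Fin l)) :
    Matrix (Fin l) (Fin l) ℝ :=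
  (L.map (reflM l b)).prod

lemma wP_nil : wP l b [] = 1 := rfl

lemma wP_cons (j : Fin l) (L : List (Fin l)) :
    wP l b (j :: L) = reflM l b j * wP l b L := by
  simp [wP]

lemma wP_append (L1 L2 : List (Fin l)) :
    wP l b (L1 ++ L2) = wP l b L1 * wP l b L2 := by
  simp [wP]

lemma wP_cons_mulVec (j : Fin l) (L : List (Fin l)) (v : Fin l → ℝ) :
    wP l b (j :: L) *ᵥ v = reflM l b j *ᵥ (wP l b L *ᵥ v) := by
  rw [wP_cons, ← Matrix.mulVec_mulVec]

lemma wP_append_mulVec (L1 L2 : List (Fin l)) (v : Fin l → ℝ) :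
    wP l b (L1 ++ L2) *ᵥ v = wP l b L1 *ᵥ (wP l b L2 *ᵥ v) := by
  rw [wP_append, ← Matrix.mulVec_mulVec]

lemma wP_nil_mulVec (v : Fin l → ℝ) : wP l b [] *ᵥ v = v := by
  rw [wP_nil, Matrix.one_mulVec]

lemma bform_wP (hsym : ∀ i j, i ≠ j → b i j = b j i) :
    ∀ (L : List (Fin l)) (u v : Fin l → ℝ),
      bform l b (wP l b L *ᵥ u) v = bform l b u (wP l b L.reverse *ᵥ v) := by
  intro L
  induction L with
  | nil => intro u v; rw [wP_nil_mulVec, List.reverse_nil, wP_nil_mulVec]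
  | cons j L ih =>
    intro u v
    rw [wP_cons_mulVec, bform_reflM_comm hsym, ih, List.reverse_cons, wP_append_mulVec]
    congr 1
    rw [wP_cons_mulVec, wP_nil_mulVec]

lemma wP_reverse_cancel (hsym : ∀ i j, i ≠ j → b i j = b j i) :
    ∀ (L : List (Fin l)) (v : Fin l → ℝ),
      wP l b L.reverse *ᵥ (wP l b L *ᵥ v) = v := by
  intro L
  induction L with
  | nil => intro v; rw [List.reverse_nil, wP_nil_mulVec, wP_nil_mulVec]
  | cons j L ih =>
    intro v
    rw [wP_cons_mulVec, List.reverse_cons, wP_append_mulVec]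
    have h : wP l b [j] *ᵥ (reflM l b j *ᵥ (wP l b L *ᵥ v)) = wP l b L *ᵥ v := by
      rw [wP_cons_mulVec, wP_nil_mulVec, reflM_invol hsym]
    rw [h, ih]

lemma bform_wP_self (hsym : ∀ i j, i ≠ j → b i j = b j i) (L : List (Fin l))
    (u : Fin l → ℝ) : bform l b (wP l b L *ᵥ u) (wP l b L *ᵥ u) = bform l b u u := by
  rw [bform_wP hsym, wP_reverse_cancel hsym]

lemma rootPos (hsym : ∀ i j, i ≠ j → b i j = b j i) (hge : ∀ i j, i ≠ j → 2 ≤ b i j) :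
    ∀ (L : List (Fin l)), L.Chain' (· ≠ ·) → ∀ s : Fin l,
      (∀ h : L ≠ [], L.getLast h ≠ s) →
      (∀ k, 0 ≤ (wP l b L *ᵥ Pi.single s 1) k) ∧
      (∀ k, (wP l b L *ᵥ Pi.single s 1) k ≤ (wP l b L *ᵥ Pi.single s 1) (L.headD s)) := by
  intro L
  induction L with
  | nil =>
    intro _ s _
    simp only [wP_nil_mulVec, List.headD]
    constructor
    · intro k
      by_cases hk : k = s <;> simp [Pi.single_apply, hk]
    · intro k
      by_cases hk : k = s <;> simp [Pi.single_apply, hk]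
  | cons t rest ih =>
    intro hch s hlast
    have hch' : rest.Chain' (· ≠ ·) := hch.tail
    have hlast' : ∀ h : rest ≠ [], rest.getLast h ≠ s := by
      intro h
      have h2 := hlast (List.cons_ne_nil t rest)
      rwa [List.getLast_cons h] at h2
    obtain ⟨h0, hmax⟩ := ih hch' s hlast'
    set v' : Fin l → ℝ := wP l b rest *ᵥ Pi.single s 1 with hv'
    set c : Fin l := rest.headD s with hc
    have hct : c ≠ t := by
      cases rest with
      | nil =>
        have hts : t ≠ s := by
          have h2 := hlast (List.cons_ne_nil t [])
          simpa using h2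
        simpa [hc] using Ne.symm hts
      | cons r rs =>
        have : t ≠ r := (List.isChain_cons_cons.mp hch).1
        simpa [hc] using Ne.symm this
    simp only [wP_cons_mulVec]
    have hvt : (reflM l b t *ᵥ v') t
        = -(v' t) + ∑ k ∈ Finset.univ.erase t, b t k * v' k := reflM_mulVec_self t v'
    have hsum : b t c * v' c ≤ ∑ k ∈ Finset.univ.erase t, b t k * v' k := by
      refine Finset.single_le_sum (f := fun k => b t k * v' k) ?_ ?_
      · intro k hk
        have hkt : k ≠ t := Finset.ne_of_mem_erase hk
        have h2 : (2 : ℝ) ≤ b t k := hge t k (Ne.symm hkt)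
        exact mul_nonneg (by linarith) (h0 k)
      · exact Finset.mem_erase.mpr ⟨hct, Finset.mem_univ c⟩
    have h2c : 2 * v' c ≤ b t c * v' c :=
      mul_le_mul_of_nonneg_right (hge t c (Ne.symm hct)) (h0 c)
    have hvc : v' t ≤ v' c := hmax t
    have hkey : v' c ≤ (reflM l b t *ᵥ v') t := by
      rw [hvt]; linarith
    constructor
    · intro k
      by_cases hk : k = t
      · subst hk; exact le_trans (h0 c) hkey
      · rw [reflM_mulVec_ne t v' hk]; exact h0 k
    · intro k
      have hhd : (t :: rest).headD s = t := rfl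
      rw [hhd]
      by_cases hk : k = t
      · subst hk; exact le_refl _
      · rw [reflM_mulVec_ne t v' hk]
        exact le_trans (le_trans (hmax k) hkey) (le_refl _)

def push {l : ℕ} (x : Fin l) : List (Fin l) → List (Fin l)
  | [] => [x]
  | y :: ys => if x = y then ys else x :: y :: ys

def red {l : ℕ} : List (Fin l) → List (Fin l)
  | [] => []
  | x :: xs => push x (red xs)

lemma push_subset {x a : Fin l} : ∀ {L : List (Fin l)}, a ∈ push x L → a = x ∨ a ∈ L := by
  intro L
  cases L with
  | nil => intro h; simp [push] at h; exact Or.inl h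
  | cons y ys =>
    intro h
    by_cases hxy : x = y
    · simp [push, hxy] at h
      exact Or.inr (by simp [h])
    · simp [push, hxy] at h
      rcases h with h | h | h
      · exact Or.inl h
      · exact Or.inr (by simp [h])
      · exact Or.inr (by simp [h])

lemma red_subset {a : Fin l} : ∀ {L : List (Fin l)}, a ∈ red L → a ∈ L := by
  intro L
  induction L with
  | nil => intro h; simpa [red] using h
  | cons x xs ih =>
    intro h
    rcases push_subset h with h | h
    · simp [h]
    · simp [ih h]

lemma push_chain {x : Fin l} : ∀ {L : List (Fin l)},
    L.Chain' (· ≠ ·) → (push x L).Chain' (· ≠ ·) := by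
  intro L
  cases L with
  | nil => intro _; simp [push, List.Chain']
  | cons y ys =>
    intro h
    by_cases hxy : x = y
    · simpa [push, hxy, List.Chain'] using List.IsChain.tail h
    · have hp : push x (y :: ys) = x :: y :: ys := by simp [push, hxy]
      rw [hp]
      exact List.isChain_cons_cons.mpr ⟨hxy, h⟩

lemma red_chain : ∀ (L : List (Fin l)), (red L).Chain' (· ≠ ·) := by
  intro L
  induction L with
  | nil => simp [red, List.Chain']
  | cons x xs ih => exact push_chain ih

lemma push_act (hsym : ∀ i j, i ≠ j → b i j = b j i) (x : Fin l) :
    ∀ (L : List (Fin l)) (v : Fin l → ℝ),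
      wP l b (push x L) *ᵥ v = reflM l b x *ᵥ (wP l b L *ᵥ v) := by
  intro L v
  cases L with
  | nil => simp [push, wP_cons_mulVec, wP_nil_mulVec]
  | cons y ys =>
    by_cases hxy : x = y
    · subst hxy
      have hp : push x (x :: ys) = ys := by simp [push]
      rw [hp, wP_cons_mulVec, reflM_invol hsym]
    · have hp : push x (y :: ys) = x :: y :: ys := by simp [push, hxy]
      rw [hp, wP_cons_mulVec]

lemma red_act (hsym : ∀ i j, i ≠ j → b i j = b j i) :
    ∀ (L : List (Fin l)) (v : Fin l → ℝ), wP l b (red L) *ᵥ v = wP l b L *ᵥ v := by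
  intro L
  induction L with
  | nil => intro v; rfl
  | cons x xs ih =>
    intro v
    rw [show red (x :: xs) = push x (red xs) from rfl, push_act hsym, ih, wP_cons_mulVec]

lemma root_norm (hsym : ∀ i j, i ≠ j → b i j = b j i) (L : List (Fin l)) (i : Fin l) :
    bform l b (wP l b L *ᵥ Pi.single i 1) (wP l b L *ᵥ Pi.single i 1) = 1 := by
  rw [bform_wP_self hsym, bform_ee]

lemma word_pos_of_red_getLast_ne (hsym : ∀ i j, i ≠ j → b i j = b j i)
    (hge : ∀ i j, i ≠ j → 2 ≤ b i j) (L : List (Fin l)) (i : Fin l)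
    (h : ∀ hne : red L ≠ [], (red L).getLast hne ≠ i) :
    ∀ k, 0 ≤ (wP l b L *ᵥ Pi.single i 1) k := by
  intro k
  rw [← red_act hsym]
  exact (rootPos hsym hge (red L) (red_chain L) i h).1 k

lemma root_sign (hsym : ∀ i j, i ≠ j → b i j = b j i) (hge : ∀ i j, i ≠ j → 2 ≤ b i j)
    (L : List (Fin l)) (i : Fin l) :
    (∀ k, 0 ≤ (wP l b L *ᵥ Pi.single i 1) k) ∨ (∀ k, (wP l b L *ᵥ Pi.single i 1) k ≤ 0) := by
  by_cases hne : red L = []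
  · left
    exact word_pos_of_red_getLast_ne hsym hge L i (fun h => absurd hne h)
  · by_cases hlast : (red L).getLast hne = i
    · right
      have hdecomp : red L = (red L).dropLast ++ [i] := by
        conv_lhs => rw [← List.dropLast_append_getLast hne]
        rw [hlast]
      have hch : ((red L).dropLast ++ [i]).Chain' (· ≠ ·) := by
        rw [← hdecomp]; exact red_chain L
      have hchd : ((red L).dropLast).Chain' (· ≠ ·) := (List.isChain_append.mp hch).1
      have hlastd : ∀ hne2 : (red L).dropLast ≠ [], ((red L).dropLast).getLast hne2 ≠ i := by
        intro hne2
        have h3 := (List.isChain_append.mp hch).2.2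
        have h4 := h3 (((red L).dropLast).getLast hne2) (by
          rw [List.getLast?_eq_getLast hne2]; rfl) i rfl
        exact h4
      intro k
      rw [← red_act hsym, hdecomp, wP_append_mulVec]
      have h5 : wP l b [i] *ᵥ (Pi.single i 1 : Fin l → ℝ) = -(Pi.single i 1 : Fin l → ℝ) := by
        rw [wP_cons_mulVec, wP_nil_mulVec, reflM_single_self hsym]
      rw [h5, Matrix.mulVec_neg]
      have h6 := (rootPos hsym hge ((red L).dropLast) hchd i hlastd).1 k
      simp only [Pi.neg_apply]
      linarith
    · left
      exact word_pos_of_red_getLast_ne hsym hge L i (fun _ => hlast)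

lemma root_ne_single (α : Fin l → ℝ) (hpos : ∀ k, 0 ≤ α k) (hnorm : bform l b α α = 1)
    (s : Fin l) (hne : α ≠ Pi.single s 1) : ∃ k, k ≠ s ∧ 0 < α k := by
  by_contra h
  push_neg at h
  have hz : ∀ k, k ≠ s → α k = 0 := fun k hk => le_antisymm (h k hk) (hpos k)
  have hα : α = (α s) • (Pi.single s 1 : Fin l → ℝ) := by
    funext k
    by_cases hk : k = s
    · subst hk; simp
    · simp [Pi.single_eq_of_ne hk, hz k hk]
  rw [hα, bform_smul_left, bform_smul_right, bform_ee] at hnorm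
  have h1 : (α s - 1) * (α s + 1) = 0 := by nlinarith
  rcases mul_eq_zero.mp h1 with h2 | h2
  · have h3 : α s = 1 := by linarith
    exact hne (by rw [hα, h3, one_smul])
  · have h3 : α s = -1 := by linarith
    have := hpos s
    linarith

end Lemmas

def isJRoot {l : ℕ} (b : Fin l → Fin l → ℝ) (J : Set (Fin l)) (α : Fin l → ℝ) : Prop :=
  (∃ (L : List (Fin l)) (i : Fin l), (∀ j ∈ L, j ∈ J) ∧ i ∈ J ∧
    α = wP l b L *ᵥ Pi.single i 1) ∧ ∀ k, 0 ≤ α k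

def NegJ {l : ℕ} (b : Fin l → Fin l → ℝ) (J : Set (Fin l)) (z : Fin l → ℝ) :
    Set (Fin l → ℝ) :=
  {α | isJRoot b J α ∧ bform l b z α < 0}

def Pout {l : ℕ} (b : Fin l → Fin l → ℝ) (J : Set (Fin l)) (z : Fin l → ℝ) : Prop :=
  ∀ (L : List (Fin l)) (i : Fin l), (∀ j ∈ L, j ∈ J) → i ∉ J →
    0 ≤ bform l b z (wP l b L *ᵥ Pi.single i 1)

section Lemmas2

variable {l : ℕ} {b : Fin l → Fin l → ℝ} {J : Set (Fin l)}

lemma chamberD_bform_nonneg {x : Fin l → ℝ} (hx : x ∈ chamberD l b) (α : Fin l → ℝ)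
    (hα : ∀ k, 0 ≤ α k) : 0 ≤ bform l b x α := by
  rw [bform_expand]
  exact Finset.sum_nonneg fun k _ => mul_nonneg (hα k) (hx k)

lemma isJRoot_single {s : Fin l} (hs : s ∈ J) : isJRoot b J (Pi.single s 1) := by
  constructor
  · exact ⟨[], s, by simp, hs, (wP_nil_mulVec _).symm⟩
  · intro k
    by_cases hk : k = s <;> simp [Pi.single_apply, hk]

lemma reflect_root (hsym : ∀ i j, i ≠ j → b i j = b j i) (hge : ∀ i j, i ≠ j → 2 ≤ b i j)
    {s : Fin l} (hs : s ∈ J) {α : Fin l → ℝ} (hα : isJRoot b J α)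
    (hne : α ≠ Pi.single s 1) : isJRoot b J (reflM l b s *ᵥ α) := by
  obtain ⟨⟨L, i, hL, hiJ, hform⟩, hpos⟩ := hα
  have hform' : reflM l b s *ᵥ α = wP l b (s :: L) *ᵥ Pi.single i 1 := by
    rw [hform, ← wP_cons_mulVec]
  refine ⟨⟨s :: L, i, ?_, hiJ, hform'⟩, ?_⟩
  · intro j hj
    rcases List.mem_cons.mp hj with h | h
    · exact h ▸ hs
    · exact hL j h
  · rcases root_sign hsym hge (s :: L) i with h | h
    · intro k; rw [hform']; exact h k
    · exfalso
      have hnorm : bform l b α α = 1 := by rw [hform]; exact root_norm hsym L i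
      obtain ⟨k, hks, hkpos⟩ := root_ne_single α hpos hnorm s hne
      have h1 : (reflM l b s *ᵥ α) k = α k := reflM_mulVec_ne s α hks
      have h2 := h k
      rw [hform'] at h1
      linarith
lemma reflect_pos_ne_single (hsym : ∀ i j, i ≠ j → b i j = b j i) {s : Fin l}
    {α : Fin l → ℝ} (hpos : ∀ k, 0 ≤ α k) : reflM l b s *ᵥ α ≠ Pi.single s 1 := by
  intro h
  have h1 : α = reflM l b s *ᵥ (Pi.single s 1 : Fin l → ℝ) := by
    rw [← h, reflM_invol hsym]
  rw [reflM_single_self hsym] at h1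
  have h2 := hpos s
  rw [h1] at h2
  simp at h2
  linarith

lemma negJ_reflect_subset (hsym : ∀ i j, i ≠ j → b i j = b j i)
    (hge : ∀ i j, i ≠ j → 2 ≤ b i j) {s : Fin l} (hs : s ∈ J) (z : Fin l → ℝ) :
    NegJ b J (reflM l b s *ᵥ z) \ {Pi.single s 1} ⊆
      (fun α => reflM l b s *ᵥ α) '' (NegJ b J z \ {Pi.single s 1}) := by
  rintro α ⟨⟨hroot, hneg⟩, hne⟩
  have hne' : α ≠ Pi.single s 1 := hne
  have hβroot : isJRoot b J (reflM l b s *ᵥ α) := reflect_root hsym hge hs hroot hne'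
  have hβneg : bform l b z (reflM l b s *ᵥ α) < 0 := by
    have h1 : bform l b (reflM l b s *ᵥ z) α = bform l b z (reflM l b s *ᵥ α) :=
      bform_reflM_comm hsym s z α
    linarith
  have hβne : reflM l b s *ᵥ α ≠ Pi.single s 1 := reflect_pos_ne_single hsym hroot.2
  exact ⟨reflM l b s *ᵥ α, ⟨⟨hβroot, hβneg⟩, hβne⟩, reflM_invol hsym s α⟩

lemma mem_WJ_word {w : Matrix (Fin l) (Fin l) ℝ} (hw : w ∈ WJ l b J) :
    ∃ L : List (Fin l), (∀ j ∈ L, j ∈ J) ∧ wP l b L = w := by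
  induction hw using Submonoid.closure_induction with
  | mem x hx =>
    obtain ⟨j, hj, rfl⟩ := hx
    exact ⟨[j], by simpa using hj, by simp [wP]⟩
  | one => exact ⟨[], by simp, rfl⟩
  | mul x y _ _ ihx ihy =>
    obtain ⟨L1, hL1, rfl⟩ := ihx
    obtain ⟨L2, hL2, rfl⟩ := ihy
    refine ⟨L1 ++ L2, ?_, (wP_append L1 L2)⟩
    intro j hj
    rcases List.mem_append.mp hj with h | h
    · exact hL1 j h
    · exact hL2 j h

lemma wP_mem_WJ {L : List (Fin l)} (hL : ∀ j ∈ L, j ∈ J) : wP l b L ∈ WJ l b J := by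
  induction L with
  | nil => exact one_mem _
  | cons j L ih =>
    rw [wP_cons]
    exact mul_mem (Submonoid.subset_closure ⟨j, hL j (by simp), rfl⟩)
      (ih fun k hk => hL k (by simp [hk]))

lemma mem_TJ_iff {z : Fin l → ℝ} :
    z ∈ TJ l b J ↔ ∃ (L : List (Fin l)) (x : Fin l → ℝ),
      (∀ j ∈ L, j ∈ J) ∧ x ∈ chamberD l b ∧ z = wP l b L *ᵥ x := by
  constructor
  · rintro ⟨w, hw, x, hx, rfl⟩
    obtain ⟨L, hL, rfl⟩ := mem_WJ_word hw
    exact ⟨L, x, hL, hx, rfl⟩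
  · rintro ⟨L, x, hL, hx, rfl⟩
    exact ⟨wP l b L, wP_mem_WJ hL, x, hx, rfl⟩

lemma negJ_finite (hsym : ∀ i j, i ≠ j → b i j = b j i) (hge : ∀ i j, i ≠ j → 2 ≤ b i j) :
    ∀ (L : List (Fin l)), (∀ j ∈ L, j ∈ J) → ∀ x : Fin l → ℝ, x ∈ chamberD l b →
      (NegJ b J (wP l b L *ᵥ x)).Finite := by
  intro L
  induction L with
  | nil =>
    intro _ x hx
    have h : NegJ b J (wP l b [] *ᵥ x) = ∅ := by
      rw [wP_nil_mulVec]
      ext α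
      simp only [NegJ, Set.mem_setOf_eq, Set.mem_empty_iff_false, iff_false, not_and]
      intro hroot
      exact not_lt.mpr (chamberD_bform_nonneg hx α hroot.2)
    rw [h]
    exact Set.finite_empty
  | cons s L ih =>
    intro hL x hx
    have hsJ : s ∈ J := hL s (by simp)
    have hfin2 : (NegJ b J (wP l b L *ᵥ x)).Finite := ih (fun k hk => hL k (by simp [hk])) x hx
    have hsub : NegJ b J (wP l b (s :: L) *ᵥ x) ⊆
        insert (Pi.single s 1) ((fun α => reflM l b s *ᵥ α) ''
          (NegJ b J (wP l b L *ᵥ x) \ {Pi.single s 1})) := by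
      intro α hα
      by_cases hne : α = Pi.single s 1
      · exact hne ▸ Set.mem_insert _ _
      · refine Set.mem_insert_of_mem _ ?_
        apply negJ_reflect_subset hsym hge hsJ (wP l b L *ᵥ x)
        rw [← wP_cons_mulVec]
        exact ⟨hα, hne⟩
    exact Set.Finite.subset (((hfin2.diff).image _).insert _) hsub

lemma pout_word (hsym : ∀ i j, i ≠ j → b i j = b j i) (hge : ∀ i j, i ≠ j → 2 ≤ b i j)
    (L : List (Fin l)) (hL : ∀ j ∈ L, j ∈ J) (x : Fin l → ℝ) (hx : x ∈ chamberD l b) :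
    Pout b J (wP l b L *ᵥ x) := by
  intro L2 i hL2 hi
  rw [bform_wP hsym, ← wP_append_mulVec]
  apply chamberD_bform_nonneg hx
  apply word_pos_of_red_getLast_ne hsym hge
  intro hne hlast
  have hmem : (red (L.reverse ++ L2)).getLast hne ∈ L.reverse ++ L2 :=
    red_subset (List.getLast_mem hne)
  have hmemJ : (red (L.reverse ++ L2)).getLast hne ∈ J := by
    rcases List.mem_append.mp hmem with h | h
    · exact hL _ (List.mem_reverse.mp h)
    · exact hL2 _ h
  rw [hlast] at hmemJ
  exact hi hmemJ

end Lemmas2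

section Descent

variable {l : ℕ} {b : Fin l → Fin l → ℝ} {J : Set (Fin l)}

lemma chamber_subset_TJ {z : Fin l → ℝ} (hz : z ∈ chamberD l b) : z ∈ TJ l b J :=
  ⟨1, one_mem _, z, hz, (Matrix.one_mulVec z).symm⟩

lemma descent (hsym : ∀ i j, i ≠ j → b i j = b j i) (hge : ∀ i j, i ≠ j → 2 ≤ b i j) :
    ∀ n : ℕ, ∀ z : Fin l → ℝ, (NegJ b J z).Finite → (NegJ b J z).ncard ≤ n →
      Pout b J z → z ∈ TJ l b J := by
  intro n
  induction n with
  | zero =>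
    intro z hfin hcard hpout
    by_cases hall : ∀ j ∈ J, 0 ≤ bform l b z (Pi.single j 1)
    · apply chamber_subset_TJ
      intro i
      by_cases hi : i ∈ J
      · exact hall i hi
      · have := hpout [] i (by simp) hi
        rwa [wP_nil_mulVec] at this
    · exfalso
      push_neg at hall
      obtain ⟨s, hsJ, hneg⟩ := hall
      have hes : Pi.single s 1 ∈ NegJ b J z := ⟨isJRoot_single hsJ, hneg⟩
      have hpos : 0 < (NegJ b J z).ncard := (Set.ncard_pos hfin).mpr ⟨_, hes⟩
      omega
  | succ n ih =>
    intro z hfin hcard hpout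
    by_cases hall : ∀ j ∈ J, 0 ≤ bform l b z (Pi.single j 1)
    · apply chamber_subset_TJ
      intro i
      by_cases hi : i ∈ J
      · exact hall i hi
      · have := hpout [] i (by simp) hi
        rwa [wP_nil_mulVec] at this
    · push_neg at hall
      obtain ⟨s, hsJ, hneg⟩ := hall
      have hes : Pi.single s 1 ∈ NegJ b J z := ⟨isJRoot_single hsJ, hneg⟩
      set z' : Fin l → ℝ := reflM l b s *ᵥ z with hz'
      have hzz : z = reflM l b s *ᵥ z' := (reflM_invol hsym s z).symm
      have hes' : Pi.single s 1 ∉ NegJ b J z' := by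
        intro h
        have h1 : bform l b z' (Pi.single s 1)
            = bform l b z (reflM l b s *ᵥ (Pi.single s 1 : Fin l → ℝ)) :=
          bform_reflM_comm hsym s z (Pi.single s 1)
        rw [reflM_single_self hsym, bform_neg_right] at h1
        have h2 := h.2
        rw [h1] at h2
        linarith
      have hsub : NegJ b J z' ⊆
          (fun α => reflM l b s *ᵥ α) '' (NegJ b J z \ {Pi.single s 1}) := by
        intro α hα
        have hne : α ≠ Pi.single s 1 := fun h => hes' (h ▸ hα)
        exact negJ_reflect_subset hsym hge hsJ z ⟨hα, hne⟩
      have hfin' : (NegJ b J z').Finite :=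
        Set.Finite.subset ((hfin.diff).image _) hsub
      have hcard' : (NegJ b J z').ncard ≤ n := by
        have h1 : (NegJ b J z').ncard ≤
            ((fun α => reflM l b s *ᵥ α) '' (NegJ b J z \ {Pi.single s 1})).ncard :=
          Set.ncard_le_ncard hsub ((hfin.diff).image _)
        have h2 : ((fun α => reflM l b s *ᵥ α) ''
            (NegJ b J z \ {Pi.single s 1})).ncard ≤ (NegJ b J z \ {Pi.single s 1}).ncard :=
          Set.ncard_image_le (hfin.diff)
        have h3 : (NegJ b J z \ {Pi.single s 1}).ncard = (NegJ b J z).ncard - 1 :=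
          Set.ncard_diff_singleton_of_mem hes
        have h4 : 1 ≤ (NegJ b J z).ncard := (Set.ncard_pos hfin).mpr ⟨_, hes⟩
        omega
      have hpout' : Pout b J z' := by
        intro L2 i hL2 hi
        rw [hz', bform_reflM_comm hsym, ← wP_cons_mulVec]
        refine hpout (s :: L2) i ?_ hi
        intro j hj
        rcases List.mem_cons.mp hj with h | h
        · exact h ▸ hsJ
        · exact hL2 j h
      obtain ⟨w, hw, x, hx, heq⟩ := ih z' hfin' hcard' hpout'
      refine ⟨reflM l b s * w, mul_mem (Submonoid.subset_closure ⟨s, hsJ, rfl⟩) hw, x, hx, ?_⟩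
      rw [hzz, heq, Matrix.mulVec_mulVec]

end Descent

/-- **`T_J` is a convex cone**: it is convex and stable under nonnegative scaling. -/
theorem TJ_convexCone (l : ℕ) (hl : 2 ≤ l) (b : Fin l → Fin l → ℝ)
    (hsym : ∀ i j, i ≠ j → b i j = b j i) (hge : ∀ i j, i ≠ j → 2 ≤ b i j)
    (J : Set (Fin l)) :
    Convex ℝ (TJ l b J) ∧ (∀ c : ℝ, 0 ≤ c → ∀ x ∈ TJ l b J, c • x ∈ TJ l b J) := by
  constructor
  · intro x hx y hy a c ha hc _hac
    obtain ⟨Lx, x0, hLx, hx0, rfl⟩ := mem_TJ_iff.mp hx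
    obtain ⟨Ly, y0, hLy, hy0, rfl⟩ := mem_TJ_iff.mp hy
    set z : Fin l → ℝ := a • (wP l b Lx *ᵥ x0) + c • (wP l b Ly *ᵥ y0) with hz
    have hfinx := negJ_finite hsym hge Lx hLx x0 hx0
    have hfiny := negJ_finite hsym hge Ly hLy y0 hy0
    have hsub : NegJ b J z ⊆ NegJ b J (wP l b Lx *ᵥ x0) ∪ NegJ b J (wP l b Ly *ᵥ y0) := by
      rintro α ⟨hroot, hneg⟩
      by_contra hcon
      simp only [Set.mem_union, not_or] at hcon
      have h1 : 0 ≤ bform l b (wP l b Lx *ᵥ x0) α := by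
        by_contra h
        exact hcon.1 ⟨hroot, lt_of_not_ge h⟩
      have h2 : 0 ≤ bform l b (wP l b Ly *ᵥ y0) α := by
        by_contra h
        exact hcon.2 ⟨hroot, lt_of_not_ge h⟩
      rw [hz, bform_comb] at hneg
      nlinarith
    have hfin : (NegJ b J z).Finite := Set.Finite.subset (hfinx.union hfiny) hsub
    have hpout : Pout b J z := by
      intro L2 i hL2 hi
      rw [hz, bform_comb]
      have h1 := pout_word hsym hge Lx hLx x0 hx0 L2 i hL2 hi
      have h2 := pout_word hsym hge Ly hLy y0 hy0 L2 i hL2 hi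
      nlinarith
    exact descent hsym hge (NegJ b J z).ncard z hfin le_rfl hpout
  · rintro c hc x ⟨w, hw, x0, hx0, rfl⟩
    refine ⟨w, hw, c • x0, ?_, ?_⟩
    · intro i
      rw [bform_smul_left]
      exact mul_nonneg hc (hx0 i)
    · rw [Matrix.mulVec_smul]
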